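/- Let K be a finite extension of ℚ_p with uniformizer π, k ≥ 1, m ≥ 2, β ∈ K with β ∈ K^{(k)} of valuation 0, and ν_1,…,ν_{m−2} ∈ ℤ. Define D = {x ∈ ∏_{i=1}^{m−1} R^{(k)} | ord(β) + Σ_{i=1}^{m−2} ν_i ord(x_i) < ord(x_{m−1})} (with all x_i nonzero) and E₂ = {x ∈ ∏_{i=1}^{m} R^{(k)} | ord(β) + Σ_{i=1}^{m−2} ν_i ord(x_i) < ord(x_m) ≤ ord(β) + ord(x_{m−1}) + Σ_{i=1}^{m−2} ν_i ord(x_i)}. Then the map D × R^{(k)} → E₂ given by x ↦ (x_1,…,x_{m−2}, x_{m−1} x_m / (β ∏_{i=1}^{m−2} x_i^{ν_i}), x_{m−1}) is a well-defined bijection. -/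

import Mathlib

open scoped BigOperators ENNReal NNReal

structure PadicLike (p : ℕ) [Fact p.Prime] (K : Type*) [Field K] [Algebra ℚ_[p] K] where
  ord : K → ℤ
  pi : K
  q : ℕ
  pi_ne_zero : pi ≠ 0
  ord_pi : ord pi = 1
  one_lt_q : 1 < q
  ord_mul : ∀ x y : K, x ≠ 0 → y ≠ 0 → ord (x * y) = ord x + ord y
  ord_min_le_add : ∀ x y : K, x ≠ 0 → y ≠ 0 → x + y ≠ 0 → min (ord x) (ord y) ≤ ord (x + y)
  ord_compat : ∃ e : ℕ, 0 < e ∧ ∀ x : ℚ_[p], x ≠ 0 →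
    ord (algebraMap ℚ_[p] K x) = (e : ℤ) * x.valuation

namespace PadicLike
variable {p : ℕ} [Fact p.Prime] {K : Type*} [Field K] [Algebra ℚ_[p] K]

/-- The valuation ring `R = {x ∈ K | ord x ≥ 0}`. -/
def R (v : PadicLike p K) : Set K := {x | x = 0 ∨ 0 ≤ v.ord x}

/-- `X^{(k)} = {x ∈ X | x ≠ 0 and ord(π^{-ord x} x - 1) ≥ k}` (where `ord 0 = ∞` is
interpreted via the disjunct `π^{-ord x} x = 1`). -/
def lvl (v : PadicLike p K) (X : Set K) (k : ℤ) : Set K :=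
  {x | x ∈ X ∧ x ≠ 0 ∧ (v.pi ^ (-v.ord x) * x = 1 ∨ k ≤ v.ord (v.pi ^ (-v.ord x) * x - 1))}

/-- `P_n`, the set of nonzero `n`-th powers in `K`. -/
def Pset (n : ℕ) : Set K := {x : K | x ≠ 0 ∧ ∃ y : K, y ^ n = x}

end PadicLike

namespace PadicLike
variable {p : ℕ} [Fact p.Prime] {K : Type*} [Field K] [Algebra ℚ_[p] K]

variable (v : PadicLike p K)

theorem ord_one' : v.ord 1 = 0 := by
  have := v.ord_mul 1 1 one_ne_zero one_ne_zero
  simpa using this.symm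

theorem ord_inv' {x : K} (hx : x ≠ 0) : v.ord x⁻¹ = -v.ord x := by
  have := v.ord_mul x x⁻¹ hx (inv_ne_zero hx)
  rw [mul_inv_cancel₀ hx, v.ord_one'] at this
  omega

theorem ord_neg' {x : K} (hx : x ≠ 0) : v.ord (-x) = v.ord x := by
  have hm1 : v.ord (-1 : K) = 0 := by
    have := v.ord_mul (-1) (-1) (by norm_num) (by norm_num)
    rw [neg_mul_neg, one_mul, v.ord_one'] at this; omega
  have := v.ord_mul (-1) x (by norm_num) hx
  rw [neg_one_mul] at this; omega

theorem ord_zpow' {x : K} (hx : x ≠ 0) (n : ℤ) : v.ord (x ^ n) = n * v.ord x := by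
  induction n using Int.induction_on with
  | zero => simpa using v.ord_one'
  | succ n ih =>
      rw [zpow_add_one₀ hx, v.ord_mul _ _ (zpow_ne_zero _ hx) hx, ih]; ring
  | pred n ih =>
      rw [zpow_sub_one₀ hx, v.ord_mul _ _ (zpow_ne_zero _ hx) (inv_ne_zero hx),
        v.ord_inv' hx, ih]; ring

theorem ord_pi_zpow (n : ℤ) : v.ord (v.pi ^ n) = n := by
  rw [v.ord_zpow' v.pi_ne_zero, v.ord_pi, mul_one]

theorem ord_div' {x y : K} (hx : x ≠ 0) (hy : y ≠ 0) :
    v.ord (x / y) = v.ord x - v.ord y := by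
  rw [div_eq_mul_inv, v.ord_mul _ _ hx (inv_ne_zero hy), v.ord_inv' hy]; omega

/-- Level set without the integrality condition. -/
def Ek (v : PadicLike p K) (k : ℤ) : Set K :=
  {x | x ≠ 0 ∧ (v.pi ^ (-v.ord x) * x = 1 ∨ k ≤ v.ord (v.pi ^ (-v.ord x) * x - 1))}

theorem mem_lvl_iff {k : ℤ} {x : K} :
    x ∈ v.lvl v.R k ↔ x ∈ v.Ek k ∧ 0 ≤ v.ord x := by
  constructor
  · rintro ⟨hR, hx, h⟩
    exact ⟨⟨hx, h⟩, hR.resolve_left hx⟩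
  · rintro ⟨⟨hx, h⟩, hR⟩
    exact ⟨Or.inr hR, hx, h⟩

theorem ord_up {x : K} (hx : x ≠ 0) : v.ord (v.pi ^ (-v.ord x) * x) = 0 := by
  rw [v.ord_mul _ _ (zpow_ne_zero _ v.pi_ne_zero) hx, v.ord_pi_zpow]; omega

/-- "near-one" predicate on units. -/
def Near (v : PadicLike p K) (k : ℤ) (a : K) : Prop :=
  a = 1 ∨ k ≤ v.ord (a - 1)

theorem near_mul {k : ℤ} {a b : K} (ha0 : v.ord a = 0) (hb0 : v.ord b = 0)
    (ha : a ≠ 0) (hb : b ≠ 0) (hk : 1 ≤ k)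
    (hA : v.Near k a) (hB : v.Near k b) : v.Near k (a * b) := by
  by_cases hae : a = 1
  · subst hae; simpa using hB
  by_cases hbe : b = 1
  · subst hbe; simpa using hA
  replace hA := hA.resolve_left hae
  replace hB := hB.resolve_left hbe
  by_cases hab : a * b = 1
  · exact Or.inl hab
  right
  have hb1 : b - 1 ≠ 0 := sub_ne_zero.mpr hbe
  have ha1 : a - 1 ≠ 0 := sub_ne_zero.mpr hae
  have key : a * b - 1 = a * (b - 1) + (a - 1) := by ring
  have h1 : v.ord (a * (b - 1)) = v.ord (b - 1) := by
    rw [v.ord_mul _ _ ha hb1, ha0]; omega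
  have hsum : a * (b - 1) + (a - 1) ≠ 0 := by
    rw [← key]; intro h; rw [sub_eq_zero] at h; exact hab h
  have := v.ord_min_le_add (a * (b - 1)) (a - 1) (mul_ne_zero ha hb1) ha1 hsum
  rw [key]; omega

theorem near_inv {k : ℤ} {a : K} (ha0 : v.ord a = 0) (ha : a ≠ 0)
    (hA : v.Near k a) : v.Near k a⁻¹ := by
  rcases hA with rfl | hA
  · simp [Near]
  by_cases h1 : a = 1
  · simp [h1, Near]
  right
  have ha1 : a - 1 ≠ 0 := sub_ne_zero.mpr h1
  have key : a⁻¹ - 1 = -(a⁻¹ * (a - 1)) := by field_simp; ring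
  rw [key, v.ord_neg' (by
      intro h; rw [mul_eq_zero] at h
      rcases h with h | h
      exacts [inv_ne_zero ha h, ha1 h]),
    v.ord_mul _ _ (inv_ne_zero ha) ha1, v.ord_inv' ha, ha0]
  omega

theorem up_mul {x y : K} (hx : x ≠ 0) (hy : y ≠ 0) :
    v.pi ^ (-v.ord (x * y)) * (x * y)
      = (v.pi ^ (-v.ord x) * x) * (v.pi ^ (-v.ord y) * y) := by
  rw [v.ord_mul _ _ hx hy, neg_add, zpow_add₀ v.pi_ne_zero]; ring

theorem mem_Ek_iff {k : ℤ} {x : K} :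
    x ∈ v.Ek k ↔ x ≠ 0 ∧ v.Near k (v.pi ^ (-v.ord x) * x) := Iff.rfl

theorem Ek_mul {k : ℤ} (hk : 1 ≤ k) {x y : K} (hx : x ∈ v.Ek k) (hy : y ∈ v.Ek k) :
    x * y ∈ v.Ek k := by
  obtain ⟨hx0, hxn⟩ := hx
  obtain ⟨hy0, hyn⟩ := hy
  refine ⟨mul_ne_zero hx0 hy0, ?_⟩
  rw [v.up_mul hx0 hy0]
  exact v.near_mul (v.ord_up hx0) (v.ord_up hy0)
    (mul_ne_zero (zpow_ne_zero _ v.pi_ne_zero) hx0)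
    (mul_ne_zero (zpow_ne_zero _ v.pi_ne_zero) hy0) hk hxn hyn

theorem Ek_inv {k : ℤ} {x : K} (hx : x ∈ v.Ek k) : x⁻¹ ∈ v.Ek k := by
  obtain ⟨hx0, hxn⟩ := hx
  refine ⟨inv_ne_zero hx0, ?_⟩
  have key : v.pi ^ (-v.ord x⁻¹) * x⁻¹ = (v.pi ^ (-v.ord x) * x)⁻¹ := by
    rw [v.ord_inv' hx0, neg_neg, mul_inv, ← zpow_neg, neg_neg, mul_comm]
  rw [key]
  exact v.near_inv (v.ord_up hx0)
    (mul_ne_zero (zpow_ne_zero _ v.pi_ne_zero) hx0) hxn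

theorem Ek_one {k : ℤ} : (1 : K) ∈ v.Ek k :=
  ⟨one_ne_zero, Or.inl (by rw [v.ord_one']; simp)⟩

theorem Ek_zpow {k : ℤ} (hk : 1 ≤ k) {x : K} (hx : x ∈ v.Ek k) (n : ℤ) :
    x ^ n ∈ v.Ek k := by
  induction n using Int.induction_on with
  | zero => simpa using v.Ek_one
  | succ n ih => rw [zpow_add_one₀ hx.1]; exact v.Ek_mul hk ih hx
  | pred n ih => rw [zpow_sub_one₀ hx.1]; exact v.Ek_mul hk ih (v.Ek_inv hx)

theorem Ek_div {k : ℤ} (hk : 1 ≤ k) {x y : K} (hx : x ∈ v.Ek k) (hy : y ∈ v.Ek k) :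
    x / y ∈ v.Ek k := by
  rw [div_eq_mul_inv]; exact v.Ek_mul hk hx (v.Ek_inv hy)

theorem Ek_prod {k : ℤ} (hk : 1 ≤ k) {n : ℕ} {f : Fin n → K}
    (hf : ∀ i, f i ∈ v.Ek k) : (∏ i, f i) ∈ v.Ek k := by
  classical
  refine Finset.prod_induction f (· ∈ v.Ek k) (fun a b ha hb => v.Ek_mul hk ha hb)
    v.Ek_one (fun i _ => hf i)

theorem ord_prod {n : ℕ} {f : Fin n → K} (hf : ∀ i, f i ≠ 0) :
    v.ord (∏ i, f i) = ∑ i, v.ord (f i) := by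
  classical
  induction n with
  | zero => simpa using v.ord_one'
  | succ m ih =>
      rw [Fin.prod_univ_castSucc, Fin.sum_univ_castSucc,
        v.ord_mul _ _ (Finset.prod_ne_zero_iff.mpr (fun i _ => hf i.castSucc))
          (hf (Fin.last m)), ih (fun i => hf i.castSucc)]

end PadicLike


/-- The map `(x_1,…,x_{m-1},x_m) ↦ (x_1,…,x_{m-2}, x_{m-1} x_m/(β ∏ x_i^{ν_i}), x_{m-1})`
is a well-defined bijection from `D × R^{(k)}` onto `E₂`. Here `m = t + 2`,
coordinates `x_1,…,x_{m-2}` are indexed by `Fin t`. -/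
theorem bijOn_D_prod_lvl {p : ℕ} [Fact p.Prime] {K : Type*} [Field K]
    [Algebra ℚ_[p] K] (v : PadicLike p K) (k : ℤ) (hk : 1 ≤ k)
    (t : ℕ) (ν : Fin t → ℤ) (β : K) (hβ : β ≠ 0) (hβ0 : v.ord β = 0)
    (hβk : β - 1 = 0 ∨ k ≤ v.ord (β - 1)) :
    Set.BijOn
      (fun yu : (Fin (t + 1) → K) × K =>
        (Fin.snoc
          (Fin.snoc (fun i : Fin t => yu.1 i.castSucc)
            (yu.1 (Fin.last t) * yu.2 / (β * ∏ i : Fin t, yu.1 i.castSucc ^ ν i)))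
          (yu.1 (Fin.last t)) : Fin (t + 2) → K))
      (({y : Fin (t + 1) → K | (∀ i, y i ∈ v.lvl v.R k) ∧
          v.ord β + ∑ i : Fin t, ν i * v.ord (y i.castSucc) < v.ord (y (Fin.last t))}) ×ˢ
        v.lvl v.R k)
      {x : Fin (t + 2) → K | (∀ i, x i ∈ v.lvl v.R k) ∧
        v.ord β + ∑ i : Fin t, ν i * v.ord (x i.castSucc.castSucc) <
          v.ord (x (Fin.last (t + 1))) ∧
        v.ord (x (Fin.last (t + 1))) ≤
          v.ord β + v.ord (x ((Fin.last t).castSucc)) +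
            ∑ i : Fin t, ν i * v.ord (x i.castSucc.castSucc)} := by
  classical
  have hβE : β ∈ v.Ek k := by
    refine ⟨hβ, ?_⟩
    rw [hβ0, neg_zero, zpow_zero, one_mul]
    rcases hβk with h | h
    · exact Or.inl (by rw [sub_eq_zero] at h; exact h)
    · exact Or.inr h
  set g : (Fin (t + 2) → K) → (Fin (t + 1) → K) × K :=
    fun x => (Fin.snoc (fun i : Fin t => x i.castSucc.castSucc) (x (Fin.last (t + 1))),
      x ((Fin.last t).castSucc) * (β * ∏ i : Fin t, x i.castSucc.castSucc ^ ν i)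
        / x (Fin.last (t + 1))) with hg
  -- basic facts about a point of the source
  have srcFacts : ∀ y : Fin (t + 1) → K, (∀ i, y i ∈ v.lvl v.R k) →
      (∀ i, y i ≠ 0) ∧ (∀ i, y i ∈ v.Ek k) ∧ (∀ i, 0 ≤ v.ord (y i)) ∧
      (β * ∏ i : Fin t, y i.castSucc ^ ν i) ≠ 0 ∧
      (β * ∏ i : Fin t, y i.castSucc ^ ν i) ∈ v.Ek k ∧
      v.ord (β * ∏ i : Fin t, y i.castSucc ^ ν i)
        = ∑ i : Fin t, ν i * v.ord (y i.castSucc) := by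
    intro y hy
    have hE : ∀ i, y i ∈ v.Ek k := fun i => ((v.mem_lvl_iff).1 (hy i)).1
    have hne : ∀ i, y i ≠ 0 := fun i => (hE i).1
    have hord : ∀ i, 0 ≤ v.ord (y i) := fun i => ((v.mem_lvl_iff).1 (hy i)).2
    have hprodE : (∏ i : Fin t, y i.castSucc ^ ν i) ∈ v.Ek k :=
      v.Ek_prod hk (fun i => v.Ek_zpow hk (hE i.castSucc) (ν i))
    have hPE : (β * ∏ i : Fin t, y i.castSucc ^ ν i) ∈ v.Ek k :=
      v.Ek_mul hk hβE hprodE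
    refine ⟨hne, hE, hord, hPE.1, hPE, ?_⟩
    rw [v.ord_mul _ _ hβ hprodE.1, hβ0,
      v.ord_prod (fun i => zpow_ne_zero _ (hne i.castSucc))]
    rw [zero_add]
    exact Finset.sum_congr rfl fun i _ => v.ord_zpow' (hne i.castSucc) (ν i)
  have hMapsTo : Set.MapsTo
      (fun yu : (Fin (t + 1) → K) × K =>
        (Fin.snoc
          (Fin.snoc (fun i : Fin t => yu.1 i.castSucc)
            (yu.1 (Fin.last t) * yu.2 / (β * ∏ i : Fin t, yu.1 i.castSucc ^ ν i)))
          (yu.1 (Fin.last t)) : Fin (t + 2) → K))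
      (({y : Fin (t + 1) → K | (∀ i, y i ∈ v.lvl v.R k) ∧
          v.ord β + ∑ i : Fin t, ν i * v.ord (y i.castSucc) < v.ord (y (Fin.last t))}) ×ˢ
        v.lvl v.R k)
      {x : Fin (t + 2) → K | (∀ i, x i ∈ v.lvl v.R k) ∧
        v.ord β + ∑ i : Fin t, ν i * v.ord (x i.castSucc.castSucc) <
          v.ord (x (Fin.last (t + 1))) ∧
        v.ord (x (Fin.last (t + 1))) ≤
          v.ord β + v.ord (x ((Fin.last t).castSucc)) +
            ∑ i : Fin t, ν i * v.ord (x i.castSucc.castSucc)} := by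
    rintro ⟨y, u⟩ ⟨⟨hy, hlt0⟩, hu⟩
    have hlt : v.ord β + ∑ i : Fin t, ν i * v.ord (y i.castSucc)
        < v.ord (y (Fin.last t)) := hlt0
    clear hlt0
    obtain ⟨hne, hE, hord, hPne, hPE, hPord⟩ := srcFacts y hy
    have huE : u ∈ v.Ek k := ((v.mem_lvl_iff).1 hu).1
    have huord : 0 ≤ v.ord u := ((v.mem_lvl_iff).1 hu).2
    have hmidE : y (Fin.last t) * u / (β * ∏ i : Fin t, y i.castSucc ^ ν i) ∈ v.Ek k :=
      v.Ek_div hk (v.Ek_mul hk (hE (Fin.last t)) huE) hPE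
    have hmidord : v.ord (y (Fin.last t) * u / (β * ∏ i : Fin t, y i.castSucc ^ ν i))
        = v.ord (y (Fin.last t)) + v.ord u
          - ∑ i : Fin t, ν i * v.ord (y i.castSucc) := by
      rw [v.ord_div' (mul_ne_zero (hne _) huE.1) hPne,
        v.ord_mul _ _ (hne _) huE.1, hPord]
    refine ⟨?_, ?_, ?_⟩
    · intro i
      refine Fin.lastCases ?_ (fun j => ?_) i
      · simpa using hy (Fin.last t)
      · refine Fin.lastCases ?_ (fun i' => ?_) j
        · simp only [Fin.snoc_castSucc, Fin.snoc_last]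
          exact (v.mem_lvl_iff).2 ⟨hmidE, by omega⟩
        · simpa using hy i'.castSucc
    · simp only [Fin.snoc_castSucc, Fin.snoc_last]
      exact hlt
    · simp only [Fin.snoc_castSucc, Fin.snoc_last]
      omega
  have hMapsTo' : Set.MapsTo g
      {x : Fin (t + 2) → K | (∀ i, x i ∈ v.lvl v.R k) ∧
        v.ord β + ∑ i : Fin t, ν i * v.ord (x i.castSucc.castSucc) <
          v.ord (x (Fin.last (t + 1))) ∧
        v.ord (x (Fin.last (t + 1))) ≤
          v.ord β + v.ord (x ((Fin.last t).castSucc)) +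
            ∑ i : Fin t, ν i * v.ord (x i.castSucc.castSucc)}
      (({y : Fin (t + 1) → K | (∀ i, y i ∈ v.lvl v.R k) ∧
          v.ord β + ∑ i : Fin t, ν i * v.ord (y i.castSucc) < v.ord (y (Fin.last t))}) ×ˢ
        v.lvl v.R k) := by
    rintro x ⟨hx, h1, h2⟩
    simp only [hg, Set.mem_prod, Set.mem_setOf_eq]
    have hE : ∀ i, x i ∈ v.Ek k := fun i => ((v.mem_lvl_iff).1 (hx i)).1
    have hne : ∀ i, x i ≠ 0 := fun i => (hE i).1
    have hprodE : (∏ i : Fin t, x i.castSucc.castSucc ^ ν i) ∈ v.Ek k :=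
      v.Ek_prod hk (fun i => v.Ek_zpow hk (hE _) (ν i))
    have hQE : (β * ∏ i : Fin t, x i.castSucc.castSucc ^ ν i) ∈ v.Ek k :=
      v.Ek_mul hk hβE hprodE
    have hQord : v.ord (β * ∏ i : Fin t, x i.castSucc.castSucc ^ ν i)
        = ∑ i : Fin t, ν i * v.ord (x i.castSucc.castSucc) := by
      rw [v.ord_mul _ _ hβ hprodE.1, hβ0,
        v.ord_prod (fun i => zpow_ne_zero _ (hne _)), zero_add]
      exact Finset.sum_congr rfl fun i _ => v.ord_zpow' (hne _) (ν i)
    have huE : (x ((Fin.last t).castSucc)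
        * (β * ∏ i : Fin t, x i.castSucc.castSucc ^ ν i) / x (Fin.last (t + 1)))
        ∈ v.Ek k :=
      v.Ek_div hk (v.Ek_mul hk (hE _) hQE) (hE _)
    have huord : v.ord (x ((Fin.last t).castSucc)
        * (β * ∏ i : Fin t, x i.castSucc.castSucc ^ ν i) / x (Fin.last (t + 1)))
        = v.ord (x ((Fin.last t).castSucc))
          + ∑ i : Fin t, ν i * v.ord (x i.castSucc.castSucc)
          - v.ord (x (Fin.last (t + 1))) := by
      rw [v.ord_div' (mul_ne_zero (hne _) hQE.1) (hne _),
        v.ord_mul _ _ (hne _) hQE.1, hQord]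
    refine ⟨⟨?_, ?_⟩, ?_⟩
    · intro i
      refine Fin.lastCases ?_ (fun j => ?_) i
      · simpa using hx (Fin.last (t + 1))
      · simpa using hx j.castSucc.castSucc
    · simp only [Fin.snoc_castSucc, Fin.snoc_last]
      exact h1
    · exact (v.mem_lvl_iff).2 ⟨huE, by omega⟩
  refine Set.InvOn.bijOn ⟨?_, ?_⟩ hMapsTo hMapsTo'
  · -- LeftInvOn g f s
    rintro ⟨y, u⟩ ⟨⟨hy, hlt⟩, hu⟩
    obtain ⟨hne, hE, hord, hPne, hPE, hPord⟩ := srcFacts y hy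
    have hu0 : u ≠ 0 := ((v.mem_lvl_iff).1 hu).1.1
    simp only [hg, Fin.snoc_castSucc, Fin.snoc_last]
    refine Prod.ext ?_ ?_
    · funext i
      refine Fin.lastCases ?_ (fun j => ?_) i <;>
        simp [Fin.snoc_castSucc, Fin.snoc_last]
    · simp only
      have hL := hne (Fin.last t)
      field_simp
      exact div_self (right_ne_zero_of_mul hPne)
  · -- RightInvOn g f t
    rintro x ⟨hx, h1, h2⟩
    have hE : ∀ i, x i ∈ v.Ek k := fun i => ((v.mem_lvl_iff).1 (hx i)).1
    have hne : ∀ i, x i ≠ 0 := fun i => (hE i).1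
    have hprodE : (∏ i : Fin t, x i.castSucc.castSucc ^ ν i) ∈ v.Ek k :=
      v.Ek_prod hk (fun i => v.Ek_zpow hk (hE _) (ν i))
    have hQne : (β * ∏ i : Fin t, x i.castSucc.castSucc ^ ν i) ≠ 0 :=
      (v.Ek_mul hk hβE hprodE).1
    funext i
    refine Fin.lastCases ?_ (fun j => ?_) i
    · simp [hg, Fin.snoc_castSucc, Fin.snoc_last]
    · refine Fin.lastCases ?_ (fun i' => ?_) j
      · simp only [hg, Fin.snoc_castSucc, Fin.snoc_last]
        have hL := hne (Fin.last (t + 1))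
        field_simp
        exact mul_div_cancel_right₀ _ (right_ne_zero_of_mul hQne)
      · simp [hg, Fin.snoc_castSucc, Fin.snoc_last]
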